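/- Let E and F be real topological vector spaces whose topologies are induced by families of seminorms 𝒫 (on E) and 𝒬 (on F). Let Q : E → F be a continuous map satisfying Q(λx) = λQ(x) for all λ ∈ ℝ and x ∈ E. Let (x_ε)_{ε∈(0,1]} be a family in E such that for every p ∈ 𝒫 and every q ∈ ℕ one has p(x_ε) = O(ε^q) as ε → 0⁺. Then for every r ∈ 𝒬 and every q ∈ ℕ one has r(Q(x_ε)) = O(ε^q) as ε → 0⁺. -/

import Mathlib

open Topology Filter Asymptotics

/-- **Continuous homogeneous maps preserve negligibility.**  Let `E`, `F` be topological
vector spaces whose topologies are induced by families of seminorms `p` resp. `q`, and let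
`Q : E → F` be continuous and homogeneous.  If `(x ε)` is a negligible family in `E`
(every seminorm of the family decays faster than any power of `ε` as `ε → 0⁺`), then
`(Q (x ε))` is a negligible family in `F`. -/
theorem continuous_homogeneous_preserves_negligible
    {E F : Type*}
    [AddCommGroup E] [Module ℝ E] [TopologicalSpace E]
    [AddCommGroup F] [Module ℝ F] [TopologicalSpace F]
    {ι κ : Type*} [Nonempty ι] [Nonempty κ] (p : SeminormFamily ℝ E ι) (q : SeminormFamily ℝ F κ)
    (hp : WithSeminorms p) (hq : WithSeminorms q)
    (Q : E → F) (hQc : Continuous Q)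
    (hQh : ∀ (l : ℝ) (x : E), Q (l • x) = l • Q x)
    (x : ℝ → E)
    (hx : ∀ i : ι, ∀ m : ℕ,
      (fun ε => p i (x ε)) =O[𝓝[>] (0:ℝ)] fun ε => ε ^ m) :
    ∀ j : κ, ∀ m : ℕ,
      (fun ε => q j (Q (x ε))) =O[𝓝[>] (0:ℝ)] fun ε => ε ^ m := by
  intro j m
  -- Q 0 = 0
  have hQ0 : Q 0 = 0 := by
    have := hQh 0 0
    simpa using this
  -- continuity at 0 in seminorm terms
  have hmem : (q j).ball 0 1 ∈ 𝓝 (0 : F) :=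
    hq.hasBasis.mem_of_mem (q.basisSets_singleton_mem j one_pos)
  have hpre : Q ⁻¹' ((q j).ball 0 1) ∈ 𝓝 (0 : E) := by
    have h := hQc.tendsto 0
    rw [hQ0] at h
    exact h hmem
  obtain ⟨U, hU, hUsub⟩ := hp.hasBasis.mem_iff.mp hpre
  obtain ⟨s, δ, hδ, rfl⟩ := p.basisSets_iff.mp hU
  -- eventually, for each i ∈ s, p i (x ε) < δ * ε ^ m
  have key : ∀ᶠ ε in 𝓝[>] (0:ℝ), ∀ i ∈ s, p i (x ε) < δ * ε ^ m := by
    rw [eventually_all_finset]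
    intro i hi
    obtain ⟨C, hC0, hC⟩ := (hx i (m + 1)).exists_nonneg
    have hε1 : ∀ᶠ ε in 𝓝[>] (0:ℝ), ε < δ / (C + 1) := by
      have : Tendsto (fun ε : ℝ => ε) (𝓝[>] 0) (𝓝 0) :=
        tendsto_id.mono_left nhdsWithin_le_nhds
      exact this.eventually_lt_const (by positivity)
    have hε2 : ∀ᶠ ε in 𝓝[>] (0:ℝ), (0:ℝ) < ε := self_mem_nhdsWithin
    filter_upwards [hC.bound, hε1, hε2] with ε hb h1 h2
    have hb' : p i (x ε) ≤ C * ε ^ (m + 1) := by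
      have := hb
      rw [Real.norm_eq_abs, Real.norm_eq_abs, abs_of_nonneg (apply_nonneg _ _),
        abs_of_nonneg (by positivity)] at this
      exact this
    calc p i (x ε) ≤ C * ε ^ (m + 1) := hb'
      _ = (C * ε) * ε ^ m := by ring
      _ < δ * ε ^ m := by
          apply mul_lt_mul_of_pos_right _ (by positivity)
          calc C * ε ≤ (C + 1) * ε := by nlinarith
            _ < δ := by
                rw [lt_div_iff₀ (by positivity)] at h1
                linarith [h1]
  -- conclude
  apply Asymptotics.IsBigO.of_bound 1
  filter_upwards [key, self_mem_nhdsWithin] with ε hkey (hε : (0:ℝ) < ε)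
  have hεm : (0:ℝ) < ε ^ m := by positivity
  set y := (ε ^ m)⁻¹ • x ε with hy
  have hsup : (s.sup p) y < δ := by
    apply Seminorm.finset_sup_apply_lt hδ
    intro i hi
    have : p i y = (ε ^ m)⁻¹ * p i (x ε) := by
      rw [hy, map_smul_eq_mul]
      congr 1
      rw [Real.norm_eq_abs, abs_of_nonneg (by positivity)]
    rw [this]
    rw [inv_mul_lt_iff₀ hεm]
    calc (p i) (x ε) < δ * ε ^ m := hkey i hi
      _ = ε ^ m * δ := mul_comm _ _
  have hyball : Q y ∈ (q j).ball 0 1 := hUsub (by simpa [Seminorm.mem_ball_zero] using hsup)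
  have hq1 : q j (Q y) < 1 := by
    simpa [Seminorm.mem_ball_zero] using hyball
  have hxy : x ε = (ε ^ m) • y := by
    rw [hy, smul_smul, mul_inv_cancel₀ (ne_of_gt hεm), one_smul]
  have : q j (Q (x ε)) = ε ^ m * q j (Q y) := by
    rw [hxy, hQh, map_smul_eq_mul, Real.norm_eq_abs, abs_of_nonneg (le_of_lt hεm)]
  rw [Real.norm_eq_abs, Real.norm_eq_abs, abs_of_nonneg (apply_nonneg _ _),
    abs_of_nonneg (le_of_lt hεm), this, one_mul]
  nlinarith [apply_nonneg (q j) (Q y)]
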